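/- If a tree T on the alternative set A has a vertex of degree at least 3, then there exists a profile of preferences single-peaked on T whose majority relation is not transitive. Hence paths are the only trees on which single-peakedness guarantees transitive majority relations. -/

import Mathlib

/-- A vote (linear order) over a finite set `A`, encoded as a ranking:
`v a < v b` means `a` is strictly preferred to `b`. -/
abbrev Vote (A : Type*) [Fintype A] := A ≃ Fin (Fintype.card A)

variable {A : Type*} [Fintype A] [DecidableEq A] [Nonempty A]

/-- The top-ranked (most preferred) alternative of a vote. -/
def top (v : Vote A) : A := v.symm ⟨0, Fintype.card_pos⟩

/-- `v` is single-peaked on the graph `G`. -/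
def SinglePeakedOnTree (G : SimpleGraph A) (v : Vote A) : Prop :=
  ∀ a b : A, a ≠ b →
    (∃ p : G.Walk (top v) b, p.IsPath ∧ a ∈ p.support) → v a < v b

/-- The strict majority relation. -/
def strictMaj {n : ℕ} (P : Fin n → Vote A) (a b : A) : Prop :=
  (Finset.univ.filter fun i => P i b < P i a).card <
  (Finset.univ.filter fun i => P i a < P i b).card

/-- Auxiliary: a vote obtained by sorting according to an injective key. -/
noncomputable def voteOfKey {L : Type*} [LinearOrder L] (key : A → L)
    (hkey : Function.Injective key) : Vote A :=
  letI : LinearOrder A := LinearOrder.lift' key hkey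
  (Fintype.orderIsoFinOfCardEq A rfl).symm.toEquiv

lemma voteOfKey_lt_iff {L : Type*} [LinearOrder L] (key : A → L)
    (hkey : Function.Injective key) (y z : A) :
    voteOfKey key hkey y < voteOfKey key hkey z ↔ key y < key z := by
  letI : LinearOrder A := LinearOrder.lift' key hkey
  have h : voteOfKey key hkey y < voteOfKey key hkey z ↔ y < z :=
    (Fintype.orderIsoFinOfCardEq A rfl).symm.lt_iff_lt
  rw [h]
  constructor
  · intro h'
    exact lt_of_le_of_ne h'.le (fun he => h'.ne (hkey he))
  · intro h'
    exact lt_of_le_of_ne h'.le (fun he => h'.ne (congrArg key he))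

/-- In a tree, a strict intermediate vertex on the path from `x` to `b` is
strictly closer to `x` than `b` is. -/
lemma dist_lt_of_mem_path {B : Type*} {G : SimpleGraph B} [DecidableEq B] (hT : G.IsTree)
    {x a b : B} (p : G.Walk x b) (hp : p.IsPath) (ha : a ∈ p.support) (hab : a ≠ b) :
    G.dist x a < G.dist x b := by
  obtain ⟨q, hq⟩ := hT.isConnected.exists_walk_length_eq_dist x b
  have huniq : (⟨p, hp⟩ : G.Path x b) = ⟨q.bypass, q.bypass_isPath⟩ :=
    hT.IsAcyclic.path_unique _ _
  have hpl : p.length = G.dist x b := by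
    have h1 : p.length = q.bypass.length := by
      have := congrArg (fun r : G.Path x b => (r : G.Walk x b).length) huniq
      simpa using this
    have h2 : q.bypass.length ≤ q.length := q.length_bypass_le
    have h3 := SimpleGraph.dist_le p
    omega
  have hsum : (p.takeUntil a ha).length + (p.dropUntil a ha).length = p.length := by
    rw [← SimpleGraph.Walk.length_append, p.take_spec ha]
  have h1 : G.dist x a ≤ (p.takeUntil a ha).length := SimpleGraph.dist_le _
  have h2 : (p.dropUntil a ha).length ≠ 0 := fun h =>
    hab (SimpleGraph.Walk.eq_of_length_eq_zero h)
  omega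

/-- If a tree `G` on the alternatives has a vertex of degree at least 3, then
there is a profile single-peaked on `G` whose majority relation is not
transitive; hence paths are the only trees guaranteeing transitivity. -/
theorem nontransitive_majority_of_tree_with_high_degree
    (G : SimpleGraph A) [DecidableRel G.Adj] (hT : G.IsTree)
    (x : A) (hdeg : 3 ≤ G.degree x) :
    ∃ (n : ℕ) (P : Fin n → Vote A),
      (∀ i, SinglePeakedOnTree G (P i)) ∧ ¬ Transitive (strictMaj P) := by
  classical
  have hconn := hT.isConnected
  -- extract three distinct neighbors a b c of x
  obtain ⟨a, ha⟩ := Finset.card_pos.mp (show 0 < (G.neighborFinset x).card by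
    have : G.degree x = (G.neighborFinset x).card := rfl
    omega)
  obtain ⟨b, hb⟩ := Finset.card_pos.mp (show 0 < ((G.neighborFinset x).erase a).card by
    rw [Finset.card_erase_of_mem ha]
    have : G.degree x = (G.neighborFinset x).card := rfl
    omega)
  obtain ⟨c, hc⟩ := Finset.card_pos.mp
    (show 0 < (((G.neighborFinset x).erase a).erase b).card by
      rw [Finset.card_erase_of_mem hb, Finset.card_erase_of_mem ha]
      have : G.degree x = (G.neighborFinset x).card := rfl
      omega)
  have hcb : c ≠ b := (Finset.mem_erase.mp hc).1
  have hca : c ≠ a := (Finset.mem_erase.mp (Finset.mem_erase.mp hc).2).1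
  have hba : b ≠ a := (Finset.mem_erase.mp hb).1
  have hxa : G.Adj x a := (G.mem_neighborFinset x a).mp ha
  have hxb : G.Adj x b :=
    (G.mem_neighborFinset x b).mp (Finset.mem_erase.mp hb).2
  have hxc : G.Adj x c :=
    (G.mem_neighborFinset x c).mp
      (Finset.mem_erase.mp (Finset.mem_erase.mp hc).2).2
  -- the keys
  let e : A ≃ Fin (Fintype.card A) := Fintype.equivFin A
  let σ : Fin 3 → A → ℕ := fun i y =>
    if y = a then [0, 2, 1].get i
    else if y = b then [1, 0, 2].get i
    else if y = c then [2, 1, 0].get i else 3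
  let key : Fin 3 → A → ℕ ×ₗ (ℕ ×ₗ ℕ) := fun i y =>
    toLex (G.dist x y, toLex (σ i y, (e y : ℕ)))
  have hinj : ∀ i, Function.Injective (key i) := by
    intro i y z h
    simp only [key, toLex_inj, Prod.mk.injEq] at h
    exact e.injective (Fin.val_injective h.2.2)
  have keylt : ∀ i (y z : A), key i y < key i z ↔
      (G.dist x y < G.dist x z ∨ (G.dist x y = G.dist x z ∧
        (σ i y < σ i z ∨ (σ i y = σ i z ∧ (e y : ℕ) < (e z : ℕ))))) := by
    intro i y z
    rw [show key i y = toLex (G.dist x y, toLex (σ i y, (e y : ℕ))) from rfl,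
      show key i z = toLex (G.dist x z, toLex (σ i z, (e z : ℕ))) from rfl,
      Prod.Lex.lt_iff, Prod.Lex.lt_iff]
    exact Iff.rfl
  let P : Fin 3 → Vote A := fun i => voteOfKey (key i) (hinj i)
  have hPlt : ∀ i (y z : A), P i y < P i z ↔ key i y < key i z :=
    fun i => voteOfKey_lt_iff (key i) (hinj i)
  -- x is the top of every vote
  have hPx : ∀ i, P i x = ⟨0, Fintype.card_pos⟩ := by
    intro i
    have hle : ∀ z : A, P i x ≤ P i z := by
      intro z
      rcases eq_or_ne z x with rfl | hz
      · exact le_refl _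
      · refine le_of_lt ?_
        rw [hPlt, keylt]
        left
        have : G.dist x x = 0 := SimpleGraph.dist_self
        have := hconn.pos_dist_of_ne (Ne.symm hz)
        omega
    have h1 := hle ((P i).symm ⟨0, Fintype.card_pos⟩)
    rw [Equiv.apply_symm_apply] at h1
    exact le_antisymm h1 (Fin.mk_le_of_le_val (Nat.zero_le _))
  have htop : ∀ i, top (P i) = x := by
    intro i
    have : (P i).symm (P i x) = x := Equiv.symm_apply_apply _ _
    rw [hPx i] at this
    exact this
  -- single peakedness
  have hSP : ∀ i, SinglePeakedOnTree G (P i) := by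
    intro i y z hyz hpath
    rw [htop i] at hpath
    obtain ⟨p, hp, hy⟩ := hpath
    rw [hPlt, keylt]
    left
    exact dist_lt_of_mem_path hT p hp hy hyz
  -- distances to the neighbors
  have hda : G.dist x a = 1 := SimpleGraph.dist_eq_one_iff_adj.mpr hxa
  have hdb : G.dist x b = 1 := SimpleGraph.dist_eq_one_iff_adj.mpr hxb
  have hdc : G.dist x c = 1 := SimpleGraph.dist_eq_one_iff_adj.mpr hxc
  -- comparisons among a b c in each vote
  have hcmp : ∀ i, ∀ y z : A, G.dist x y = 1 → G.dist x z = 1 → σ i y < σ i z →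
      P i y < P i z := by
    intro i y z h1 h2 h3
    rw [hPlt, keylt]
    right
    exact ⟨by omega, Or.inl h3⟩
  have hσa : ∀ i, σ i a = [0, 2, 1].get i := fun i => if_pos rfl
  have hσb : ∀ i, σ i b = [1, 0, 2].get i := fun i => by
    simp [σ, hba]
  have hσc : ∀ i, σ i c = [2, 1, 0].get i := fun i => by
    simp [σ, hca, hcb]
  have h0ab : P 0 a < P 0 b := hcmp 0 a b hda hdb (by rw [hσa, hσb]; decide)
  have h1ba : P 1 b < P 1 a := hcmp 1 b a hdb hda (by rw [hσa, hσb]; decide)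
  have h2ab : P 2 a < P 2 b := hcmp 2 a b hda hdb (by rw [hσa, hσb]; decide)
  have h0bc : P 0 b < P 0 c := hcmp 0 b c hdb hdc (by rw [hσb, hσc]; decide)
  have h1bc : P 1 b < P 1 c := hcmp 1 b c hdb hdc (by rw [hσb, hσc]; decide)
  have h2cb : P 2 c < P 2 b := hcmp 2 c b hdc hdb (by rw [hσb, hσc]; decide)
  have h0ac : P 0 a < P 0 c := hcmp 0 a c hda hdc (by rw [hσa, hσc]; decide)
  have h1ca : P 1 c < P 1 a := hcmp 1 c a hdc hda (by rw [hσa, hσc]; decide)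
  have h2ca : P 2 c < P 2 a := hcmp 2 c a hdc hda (by rw [hσa, hσc]; decide)
  refine ⟨3, P, hSP, ?_⟩
  intro htr
  have hab : strictMaj P a b := by
    unfold strictMaj
    have e1 : (Finset.univ.filter fun i => P i a < P i b) = {0, 2} := by
      ext i
      fin_cases i <;>
        simp [Finset.mem_filter, h0ab, h2ab, asymm h1ba, Fin.ext_iff]
    have e2 : (Finset.univ.filter fun i => P i b < P i a) = {1} := by
      ext i
      fin_cases i <;>
        simp [Finset.mem_filter, h1ba, asymm h0ab, asymm h2ab, Fin.ext_iff]
    rw [e1, e2]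
    decide
  have hbc : strictMaj P b c := by
    unfold strictMaj
    have e1 : (Finset.univ.filter fun i => P i b < P i c) = {0, 1} := by
      ext i
      fin_cases i <;>
        simp [Finset.mem_filter, h0bc, h1bc, asymm h2cb, Fin.ext_iff]
    have e2 : (Finset.univ.filter fun i => P i c < P i b) = {2} := by
      ext i
      fin_cases i <;>
        simp [Finset.mem_filter, h2cb, asymm h0bc, asymm h1bc, Fin.ext_iff]
    rw [e1, e2]
    decide
  have hac := htr hab hbc
  unfold strictMaj at hac
  have e1 : (Finset.univ.filter fun i => P i a < P i c) = {0} := by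
    ext i
    fin_cases i <;>
      simp [Finset.mem_filter, h0ac, asymm h1ca, asymm h2ca, Fin.ext_iff]
  have e2 : (Finset.univ.filter fun i => P i c < P i a) = {1, 2} := by
    ext i
    fin_cases i <;>
      simp [Finset.mem_filter, h1ca, h2ca, asymm h0ac, Fin.ext_iff]
  rw [e1, e2] at hac
  exact absurd hac (by decide)
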